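/- Let L = {P, O, R} ∪ {E_k : 0<k<ω} be the relational language with P, O unary, R binary, and E_k k-ary, and let T₀ be the L-theory asserting: (A₁) P and O partition the universe; (A₂) for each k, E_k ⊆ O^k and E_k holds only on tuples with pairwise distinct entries; (A₃) R ⊆ P × O; (A₄) for each k, ∀y_0…y_{k−1}∀x (E_k(ȳ) → ¬⋀_{i<k} R(x,y_i)). Then the class K of finite L-structures satisfying T₀ has the amalgamation property: for all A, B₀, B₁ ∈ K and embeddings f_i : A → B_i (i<2), there exist C ∈ K and embeddings g_i : B_i → C with g₀ ∘ f₀ = g₁ ∘ f₁. -/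

import Mathlib

open FirstOrder Language Structure

universe u

/-- The relation symbols of the language `L = {P, O, R} ∪ {E_k : 0 < k < ω}`:
`P, O` unary, `R` binary, and `EE k` a `(k+1)`-ary symbol representing `E_{k+1}`. -/
inductive PORERel : ℕ → Type
  | P : PORERel 1
  | O : PORERel 1
  | R : PORERel 2
  | EE : (k : ℕ) → PORERel (k + 1)

/-- The relational language `L = {P, O, R} ∪ {E_k : 0 < k < ω}`. -/
def PORELang : FirstOrder.Language :=
  { Functions := fun _ => Empty
    Relations := PORERel }

/-- The `L`-structure `M` satisfies the universal theory `T₀`: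
(A₁) `P` and `O` partition the universe; (A₂) each `E_k ⊆ O^k` holds only on tuples with
pairwise distinct entries; (A₃) `R ⊆ P × O`;
(A₄) `∀ ȳ ∀ x (E_k(ȳ) → ¬ ⋀_{i<k} R(x, y_i))`. -/
def SatT0 (M : Type u) [PORELang.Structure M] : Prop :=
  (∀ a : M,
    (RelMap (L := PORELang) PORERel.P ![a] ∨ RelMap (L := PORELang) PORERel.O ![a]) ∧
    ¬ (RelMap (L := PORELang) PORERel.P ![a] ∧ RelMap (L := PORELang) PORERel.O ![a])) ∧
  (∀ (k : ℕ) (v : Fin (k + 1) → M), RelMap (L := PORELang) (PORERel.EE k) v →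
    (∀ i, RelMap (L := PORELang) PORERel.O ![v i]) ∧ Function.Injective v) ∧
  (∀ a b : M, RelMap (L := PORELang) PORERel.R ![a, b] →
    RelMap (L := PORELang) PORERel.P ![a] ∧ RelMap (L := PORELang) PORERel.O ![b]) ∧
  (∀ (k : ℕ) (v : Fin (k + 1) → M) (x : M), RelMap (L := PORELang) (PORERel.EE k) v →
    ¬ ∀ i, RelMap (L := PORELang) PORERel.R ![x, v i])

namespace AmalgAux

lemma vec1_eta {α : Type*} (w : Fin 1 → α) : w = ![w 0] := by
  funext i; fin_cases i <;> rfl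

lemma vec2_eta {α : Type*} (w : Fin 2 → α) : w = ![w 0, w 1] := by
  funext i; fin_cases i <;> rfl

lemma comp_vec1 {α β : Type*} (g : α → β) (a : α) : g ∘ ![a] = ![g a] := by
  funext i; fin_cases i <;> rfl

lemma comp_vec2 {α β : Type*} (g : α → β) (a b : α) : g ∘ ![a, b] = ![g a, g b] := by
  funext i; fin_cases i <;> rfl

lemma pair_eq {α β : Type*} {g : β → α} {w : Fin 2 → β} {c d : α}
    (h : g ∘ w = ![c, d]) : g (w 0) = c ∧ g (w 1) = d :=
  ⟨congrFun h 0, congrFun h 1⟩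

variable {A B₀ B₁ : Type u} [PORELang.Structure A] [PORELang.Structure B₀]
  [PORELang.Structure B₁]

/-- The free amalgam: `B₀` together with the part of `B₁` not coming from `A`. -/
@[reducible]
def Amal (B₀ : Type u) {A B₁ : Type u} [PORELang.Structure A] [PORELang.Structure B₁]
    (f₁ : A ↪[PORELang] B₁) : Type u :=
  B₀ ⊕ {b : B₁ // ∀ a, f₁ a ≠ b}

variable (f₀ : A ↪[PORELang] B₀) (f₁ : A ↪[PORELang] B₁)

instance [Finite B₀] [Finite B₁] : Finite (Amal B₀ f₁) := by
  unfold Amal; infer_instance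

open Classical in
noncomputable def iota1 (b : B₁) : Amal B₀ f₁ :=
  if h : ∃ a, f₁ a = b then Sum.inl (f₀ h.choose)
  else Sum.inr ⟨b, fun a ha => h ⟨a, ha⟩⟩

lemma iota1_f₁ (a : A) : iota1 f₀ f₁ (f₁ a) = Sum.inl (f₀ a) := by
  have h : ∃ a', f₁ a' = f₁ a := ⟨a, rfl⟩
  have hc : h.choose = a := f₁.injective h.choose_spec
  rw [iota1, dif_pos h, hc]

lemma iota1_eq_inl {b : B₁} {c : B₀} (h : iota1 f₀ f₁ b = Sum.inl c) :
    ∃ a, f₁ a = b ∧ f₀ a = c := by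
  rw [iota1] at h
  split_ifs at h with hb
  · exact ⟨hb.choose, hb.choose_spec, Sum.inl.inj h⟩

lemma iota1_eq_inr {b : B₁} {s} (h : iota1 f₀ f₁ b = Sum.inr s) : b = s.val := by
  rw [iota1] at h
  split_ifs at h with hb
  exact congrArg Subtype.val (Sum.inr.inj h)


lemma iota1_inj : Function.Injective (iota1 f₀ f₁) := by
  intro b b' h
  cases e : iota1 f₀ f₁ b with
  | inl c =>
    obtain ⟨a, ha1, ha2⟩ := iota1_eq_inl f₀ f₁ e
    have e' : iota1 f₀ f₁ b' = Sum.inl c := h ▸ e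
    obtain ⟨a', ha1', ha2'⟩ := iota1_eq_inl f₀ f₁ e'
    have : a = a' := f₀.injective (ha2.trans ha2'.symm)
    rw [← ha1, ← ha1', this]
  | inr s =>
    have e' : iota1 f₀ f₁ b' = Sum.inr s := h ▸ e
    rw [iota1_eq_inr f₀ f₁ e, iota1_eq_inr f₀ f₁ e']

lemma amal_cases (c : Amal B₀ f₁) :
    (∃ b, c = Sum.inl b) ∨ ∃ b, c = iota1 f₀ f₁ b ∧ ∀ a, f₁ a ≠ b := by
  cases c with
  | inl b => exact Or.inl ⟨b, rfl⟩
  | inr s =>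
    refine Or.inr ⟨s.val, ?_, s.2⟩
    rw [iota1, dif_neg (by rintro ⟨a, ha⟩; exact s.2 a ha)]

/-- The relations on the amalgam: a tuple is related iff it is the image of a
related tuple in `B₀` or in `B₁`. -/
def CRel {n : ℕ} (r : PORELang.Relations n) (v : Fin n → Amal B₀ f₁) : Prop :=
  (∃ w : Fin n → B₀, RelMap (L := PORELang) r w ∧ Sum.inl ∘ w = v) ∨
  (∃ w : Fin n → B₁, RelMap (L := PORELang) r w ∧ iota1 f₀ f₁ ∘ w = v)

noncomputable def structC : PORELang.Structure (Amal B₀ f₁) where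
  funMap := fun {n} f _ => Empty.elim f
  RelMap := fun {n} r v => CRel f₀ f₁ r v

lemma crel_inl {n : ℕ} (r : PORELang.Relations n) (x : Fin n → B₀) :
    CRel f₀ f₁ r (Sum.inl ∘ x) ↔ RelMap (L := PORELang) r x := by
  constructor
  · rintro (⟨w, hw, hwx⟩ | ⟨w, hw, hwx⟩)
    · have : w = x := funext fun i => Sum.inl.inj (congrFun hwx i)
      rwa [this] at hw
    · choose u hu1 hu2 using fun i => iota1_eq_inl f₀ f₁ (congrFun hwx i)
      have hx : x = f₀ ∘ u := funext fun i => (hu2 i).symm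
      have hw' : w = f₁ ∘ u := funext fun i => (hu1 i).symm
      rw [hw'] at hw
      rw [hx]
      exact (f₀.map_rel r u).mpr ((f₁.map_rel r u).mp hw)
  · exact fun h => Or.inl ⟨x, h, rfl⟩

lemma crel_iota {n : ℕ} (r : PORELang.Relations n) (x : Fin n → B₁) :
    CRel f₀ f₁ r (iota1 f₀ f₁ ∘ x) ↔ RelMap (L := PORELang) r x := by
  constructor
  · rintro (⟨w, hw, hwx⟩ | ⟨w, hw, hwx⟩)
    · choose u hu1 hu2 using fun i => iota1_eq_inl f₀ f₁ (congrFun hwx i).symm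
      have hx : x = f₁ ∘ u := funext fun i => (hu1 i).symm
      have hw' : w = f₀ ∘ u := funext fun i => (hu2 i).symm
      rw [hw'] at hw
      rw [hx]
      exact (f₁.map_rel r u).mpr ((f₀.map_rel r u).mp hw)
    · have : w = x := funext fun i => iota1_inj f₀ f₁ (congrFun hwx i)
      rwa [this] at hw
  · exact fun h => Or.inr ⟨x, h, rfl⟩

lemma crel_R_inl {b c : B₀} (h : CRel f₀ f₁ PORERel.R ![Sum.inl b, Sum.inl c]) :
    RelMap (L := PORELang) PORERel.R ![b, c] :=
  (crel_inl f₀ f₁ PORERel.R ![b, c]).mp (by simpa only [comp_vec2] using h)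

lemma crel_R_iota {b c : B₁}
    (h : CRel f₀ f₁ PORERel.R ![iota1 f₀ f₁ b, iota1 f₀ f₁ c]) :
    RelMap (L := PORELang) PORERel.R ![b, c] :=
  (crel_iota f₀ f₁ PORERel.R ![b, c]).mp (by simpa only [comp_vec2] using h)

lemma satC (hA : SatT0 A) (hB₀ : SatT0 B₀) (hB₁ : SatT0 B₁) :
    @SatT0 (Amal B₀ f₁) (structC f₀ f₁) := by
  letI := structC f₀ f₁
  obtain ⟨hA1, hA2, hA3, hA4⟩ := hA
  obtain ⟨hB₀1, hB₀2, hB₀3, hB₀4⟩ := hB₀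
  obtain ⟨hB₁1, hB₁2, hB₁3, hB₁4⟩ := hB₁
  refine ⟨?_, ?_, ?_, ?_⟩
  · -- A₁ : partition
    intro c
    rcases amal_cases f₀ f₁ c with ⟨b, rfl⟩ | ⟨b, rfl, hb⟩
    · constructor
      · rcases (hB₀1 b).1 with h | h
        · exact Or.inl (by rw [show (![Sum.inl b] : Fin 1 → Amal B₀ f₁) =
            Sum.inl ∘ ![b] from (comp_vec1 Sum.inl b).symm]; exact (crel_inl f₀ f₁ _ _).mpr h)
        · exact Or.inr (by rw [show (![Sum.inl b] : Fin 1 → Amal B₀ f₁) =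
            Sum.inl ∘ ![b] from (comp_vec1 Sum.inl b).symm]; exact (crel_inl f₀ f₁ _ _).mpr h)
      · rintro ⟨hp, ho⟩
        rw [show (![Sum.inl b] : Fin 1 → Amal B₀ f₁) = Sum.inl ∘ ![b] from
          (comp_vec1 Sum.inl b).symm] at hp ho
        exact (hB₀1 b).2 ⟨(crel_inl f₀ f₁ _ _).mp hp, (crel_inl f₀ f₁ _ _).mp ho⟩
    · constructor
      · rcases (hB₁1 b).1 with h | h
        · exact Or.inl (by rw [show (![iota1 f₀ f₁ b] : Fin 1 → Amal B₀ f₁) =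
            iota1 f₀ f₁ ∘ ![b] from (comp_vec1 (iota1 f₀ f₁) b).symm]; exact (crel_iota f₀ f₁ _ _).mpr h)
        · exact Or.inr (by rw [show (![iota1 f₀ f₁ b] : Fin 1 → Amal B₀ f₁) =
            iota1 f₀ f₁ ∘ ![b] from (comp_vec1 (iota1 f₀ f₁) b).symm]; exact (crel_iota f₀ f₁ _ _).mpr h)
      · rintro ⟨hp, ho⟩
        rw [show (![iota1 f₀ f₁ b] : Fin 1 → Amal B₀ f₁) = iota1 f₀ f₁ ∘ ![b] from
          (comp_vec1 (iota1 f₀ f₁) b).symm] at hp ho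
        exact (hB₁1 b).2 ⟨(crel_iota f₀ f₁ _ _).mp hp, (crel_iota f₀ f₁ _ _).mp ho⟩
  · -- A₂
    intro k v hE
    rcases hE with ⟨w, hw, rfl⟩ | ⟨w, hw, rfl⟩
    · obtain ⟨hO, hinj⟩ := hB₀2 k w hw
      refine ⟨fun i => ?_, Sum.inl_injective.comp hinj⟩
      rw [show (![(Sum.inl ∘ w) i] : Fin 1 → Amal B₀ f₁) = Sum.inl ∘ ![w i] from
        (comp_vec1 Sum.inl (w i)).symm]
      exact (crel_inl f₀ f₁ _ _).mpr (hO i)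
    · obtain ⟨hO, hinj⟩ := hB₁2 k w hw
      refine ⟨fun i => ?_, (iota1_inj f₀ f₁).comp hinj⟩
      rw [show (![(iota1 f₀ f₁ ∘ w) i] : Fin 1 → Amal B₀ f₁) = iota1 f₀ f₁ ∘ ![w i] from
        (comp_vec1 (iota1 f₀ f₁) (w i)).symm]
      exact (crel_iota f₀ f₁ _ _).mpr (hO i)
  · -- A₃
    intro a b hR
    rcases hR with ⟨w, hw, hwv⟩ | ⟨w, hw, hwv⟩
    · obtain ⟨h0, h1⟩ := pair_eq hwv
      rw [vec2_eta w] at hw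
      obtain ⟨hp, ho⟩ := hB₀3 _ _ hw
      constructor
      · rw [← h0, show (![Sum.inl (w 0)] : Fin 1 → Amal B₀ f₁) = Sum.inl ∘ ![w 0] from
          (comp_vec1 Sum.inl (w 0)).symm]
        exact (crel_inl f₀ f₁ _ _).mpr hp
      · rw [← h1, show (![Sum.inl (w 1)] : Fin 1 → Amal B₀ f₁) = Sum.inl ∘ ![w 1] from
          (comp_vec1 Sum.inl (w 1)).symm]
        exact (crel_inl f₀ f₁ _ _).mpr ho
    · obtain ⟨h0, h1⟩ := pair_eq hwv
      rw [vec2_eta w] at hw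
      obtain ⟨hp, ho⟩ := hB₁3 _ _ hw
      constructor
      · rw [← h0, show (![iota1 f₀ f₁ (w 0)] : Fin 1 → Amal B₀ f₁) =
          iota1 f₀ f₁ ∘ ![w 0] from (comp_vec1 (iota1 f₀ f₁) (w 0)).symm]
        exact (crel_iota f₀ f₁ _ _).mpr hp
      · rw [← h1, show (![iota1 f₀ f₁ (w 1)] : Fin 1 → Amal B₀ f₁) =
          iota1 f₀ f₁ ∘ ![w 1] from (comp_vec1 (iota1 f₀ f₁) (w 1)).symm]
        exact (crel_iota f₀ f₁ _ _).mpr ho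
  · -- A₄
    intro k v x hE hall
    rcases hE with ⟨w, hwE, rfl⟩ | ⟨w, hwE, rfl⟩
    · -- E witnessed in B₀
      rcases amal_cases f₀ f₁ x with ⟨b₀, rfl⟩ | ⟨b, rfl, hb⟩
      · refine hB₀4 k w b₀ hwE fun i => ?_
        exact crel_R_inl f₀ f₁ (hall i)
      · have key : ∀ i, ∃ a, f₀ a = w i ∧ RelMap (L := PORELang) PORERel.R ![b, f₁ a] := by
          intro i
          rcases hall i with ⟨w', hw', hww⟩ | ⟨w'', hw'', hww⟩
          · obtain ⟨h0, h1⟩ := pair_eq hww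
            obtain ⟨a, ha1, _⟩ := iota1_eq_inl f₀ f₁ h0.symm
            exact absurd ha1 (hb a)
          · obtain ⟨h0, h1⟩ := pair_eq hww
            obtain ⟨a, ha1, ha2⟩ := iota1_eq_inl f₀ f₁ h1
            refine ⟨a, ha2, ?_⟩
            have hw0 : w'' 0 = b := iota1_inj f₀ f₁ h0
            rw [vec2_eta w''] at hw''
            rwa [hw0, ← ha1] at hw''
        choose u h1 h2 using key
        have hwu : w = f₀ ∘ u := funext fun i => (h1 i).symm
        rw [hwu] at hwE
        have hEB₁ : RelMap (L := PORELang) (PORERel.EE k) (f₁ ∘ u) :=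
          (f₁.map_rel _ u).mpr ((f₀.map_rel _ u).mp hwE)
        exact hB₁4 k (f₁ ∘ u) b hEB₁ fun i => h2 i
    · -- E witnessed in B₁
      rcases amal_cases f₀ f₁ x with ⟨b₀, rfl⟩ | ⟨b, rfl, _⟩
      · by_cases hex : ∃ a, f₀ a = b₀
        · obtain ⟨a₀, rfl⟩ := hex
          refine hB₁4 k w (f₁ a₀) hwE fun i => ?_
          refine crel_R_iota f₀ f₁ ?_
          rw [iota1_f₁]
          exact hall i
        · have key : ∀ i, ∃ a, f₁ a = w i ∧ RelMap (L := PORELang) PORERel.R ![b₀, f₀ a] := by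
            intro i
            rcases hall i with ⟨w', hw', hww⟩ | ⟨w'', hw'', hww⟩
            · obtain ⟨h0, h1⟩ := pair_eq hww
              obtain ⟨a, ha1, ha2⟩ := iota1_eq_inl f₀ f₁ h1.symm
              refine ⟨a, ha1, ?_⟩
              have hw0 : w' 0 = b₀ := Sum.inl.inj h0
              rw [vec2_eta w'] at hw'
              rwa [hw0, ← ha2] at hw'
            · obtain ⟨h0, h1⟩ := pair_eq hww
              obtain ⟨a, _, ha2⟩ := iota1_eq_inl f₀ f₁ h0
              exact absurd ⟨a, ha2⟩ hex
          choose u h1 h2 using key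
          have hwu : w = f₁ ∘ u := funext fun i => (h1 i).symm
          rw [hwu] at hwE
          have hEB₀ : RelMap (L := PORELang) (PORERel.EE k) (f₀ ∘ u) :=
            (f₀.map_rel _ u).mpr ((f₁.map_rel _ u).mp hwE)
          exact hB₀4 k (f₀ ∘ u) b₀ hEB₀ fun i => h2 i
      · refine hB₁4 k w b hwE fun i => ?_
        exact crel_R_iota f₀ f₁ (hall i)

noncomputable def emb₀ : @Language.Embedding PORELang B₀ (Amal B₀ f₁) _ (structC f₀ f₁) :=
  letI := structC f₀ f₁
  { toFun := Sum.inl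
    inj' := Sum.inl_injective
    map_fun' := fun {n} f _ => Empty.elim f
    map_rel' := fun {n} r x => crel_inl f₀ f₁ r x }

noncomputable def emb₁ : @Language.Embedding PORELang B₁ (Amal B₀ f₁) _ (structC f₀ f₁) :=
  letI := structC f₀ f₁
  { toFun := iota1 f₀ f₁
    inj' := iota1_inj f₀ f₁
    map_fun' := fun {n} f _ => Empty.elim f
    map_rel' := fun {n} r x => crel_iota f₀ f₁ r x }

end AmalgAux

/-- the class of finite models of `T₀` has the amalgamation property. -/
theorem finite_models_T0_amalgamation
    (A B₀ B₁ : Type u)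
    [PORELang.Structure A] [PORELang.Structure B₀] [PORELang.Structure B₁]
    [Finite A] [Finite B₀] [Finite B₁]
    (hA : SatT0 A) (hB₀ : SatT0 B₀) (hB₁ : SatT0 B₁)
    (f₀ : A ↪[PORELang] B₀) (f₁ : A ↪[PORELang] B₁) :
    ∃ (C : Type u) (SC : PORELang.Structure C), Finite C ∧ @SatT0 C SC ∧
      ∃ (g₀ : @Language.Embedding PORELang B₀ C _ SC)
        (g₁ : @Language.Embedding PORELang B₁ C _ SC),
        g₀.comp f₀ = g₁.comp f₁ := by
  refine ⟨AmalgAux.Amal B₀ f₁, AmalgAux.structC f₀ f₁, inferInstance,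
    AmalgAux.satC f₀ f₁ hA hB₀ hB₁, AmalgAux.emb₀ f₀ f₁, AmalgAux.emb₁ f₀ f₁, ?_⟩
  letI := AmalgAux.structC f₀ f₁
  ext a
  exact (AmalgAux.iota1_f₁ f₀ f₁ a).symm
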